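/- Let f : ℝ → (0,1) be C¹. With M and a as above, the limit as t → +∞ of M(t, Φ⁻¹(f(t)), ∫_{-∞}^t f dγ) equals I(∫_ℝ f dγ), where I(x) = φ(Φ⁻¹(x)). -/

import Mathlib

open Real MeasureTheory Set Filter

noncomputable def phi (s : ℝ) : ℝ := Real.exp (-s ^ 2 / 2) / Real.sqrt (2 * Real.pi)

noncomputable def Phi (t : ℝ) : ℝ := ∫ s in Set.Iic t, phi s

noncomputable def GaussI (x : ℝ) : ℝ :=
  if 0 < x ∧ x < 1 then phi (Function.invFun Phi x) else 0

noncomputable def M (a : ℝ → ℝ → ℝ → ℝ) (t p y : ℝ) : ℝ :=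
  phi ((p - a t p y * t) / Real.sqrt (1 + (a t p y) ^ 2)) *
    Phi ((t + a t p y * p) / Real.sqrt (1 + (a t p y) ^ 2))


lemma phi_pos (s : ℝ) : 0 < phi s := by
  apply div_pos (Real.exp_pos _)
  positivity

lemma continuous_phi : Continuous phi := by
  unfold phi; fun_prop

lemma phi_le (s : ℝ) : phi s ≤ (Real.sqrt (2 * Real.pi))⁻¹ := by
  rw [phi, div_le_iff₀ (by positivity), inv_mul_cancel₀ (by positivity)]
  calc Real.exp (-s ^ 2 / 2) ≤ Real.exp 0 := Real.exp_le_exp.2 (by nlinarith [sq_nonneg s])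
  _ = 1 := Real.exp_zero

lemma integrable_phi : Integrable phi := by
  have h := integrable_exp_neg_mul_sq (by norm_num : (0:ℝ) < 1/2)
  have : phi = fun s => (Real.sqrt (2 * Real.pi))⁻¹ * Real.exp (-(1/2) * s ^ 2) := by
    funext s; rw [phi, div_eq_inv_mul]; ring_nf
  rw [this]
  exact h.const_mul _

lemma integral_phi : ∫ s, phi s = 1 := by
  have h := integral_gaussian (1/2 : ℝ)
  have h2 : ∫ s : ℝ, phi s = (Real.sqrt (2 * Real.pi))⁻¹ * ∫ s : ℝ, Real.exp (-(1/2) * s ^ 2) := by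
    rw [← integral_const_mul]
    congr 1; funext s; rw [phi, div_eq_inv_mul]; ring_nf
  rw [h2, h]
  rw [show π / (1/2) = 2 * π by ring]
  rw [inv_mul_cancel₀ (by positivity)]

lemma Phi_sub_Phi (u t : ℝ) : Phi t - Phi u = ∫ s in u..t, phi s := by
  rw [Phi, Phi, intervalIntegral.integral_Iic_sub_Iic integrable_phi.integrableOn integrable_phi.integrableOn]

lemma hasDerivAt_Phi (t : ℝ) : HasDerivAt Phi (phi t) t := by
  have h : ∀ x, Phi x = Phi 0 + ∫ s in (0:ℝ)..x, phi s := by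
    intro x; rw [← Phi_sub_Phi]; ring
  have hd : HasDerivAt (fun x => Phi 0 + ∫ s in (0:ℝ)..x, phi s) (phi t) t := by
    apply HasDerivAt.const_add
    exact intervalIntegral.integral_hasDerivAt_right
      integrable_phi.intervalIntegrable
      continuous_phi.aestronglyMeasurable.stronglyMeasurableAtFilter
      continuous_phi.continuousAt
  exact (Filter.EventuallyEq.hasDerivAt_iff (by filter_upwards with x using (h x).symm)).1 hd

lemma continuous_Phi : Continuous Phi := by
  have : Differentiable ℝ Phi := fun t => (hasDerivAt_Phi t).differentiableAt
  exact this.continuous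

lemma strictMono_Phi : StrictMono Phi := by
  intro u t hut
  have : 0 < ∫ s in u..t, phi s := by
    apply intervalIntegral.intervalIntegral_pos_of_pos_on
      integrable_phi.intervalIntegrable (fun x _ => phi_pos x) hut
  linarith [Phi_sub_Phi u t]

lemma Phi_pos (t : ℝ) : 0 < Phi t := by
  rw [Phi]
  rw [setIntegral_pos_iff_support_of_nonneg_ae]
  · have : Function.support phi ∩ Iic t = Iic t := by
      apply inter_eq_right.2
      intro x _; exact (phi_pos x).ne'
    rw [this]
    simp [Real.volume_Iic]
  · filter_upwards with x using (phi_pos x).le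
  · exact integrable_phi.integrableOn

lemma integral_Ioi_phi (t : ℝ) : ∫ s in Ioi t, phi s = 1 - Phi t := by
  have := intervalIntegral.integral_Iic_add_Ioi (b := t) (f:=phi) (μ:=volume) integrable_phi.integrableOn integrable_phi.integrableOn
  rw [integral_phi] at this
  have h2 : Phi t = ∫ (s : ℝ) in Iic t, phi s := rfl
  linarith

lemma Phi_lt_one (t : ℝ) : Phi t < 1 := by
  have h : 0 < ∫ s in Ioi t, phi s := by
    rw [setIntegral_pos_iff_support_of_nonneg_ae]
    · have : Function.support phi ∩ Ioi t = Ioi t := inter_eq_right.2 (fun x _ => (phi_pos x).ne')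
      rw [this]; simp [Real.volume_Ioi]
    · filter_upwards with x using (phi_pos x).le
    · exact integrable_phi.integrableOn
  have := integral_Ioi_phi t
  linarith

lemma tendsto_Phi_atTop : Tendsto Phi atTop (nhds 1) := by
  rw [show (1:ℝ) = ∫ s, phi s from integral_phi.symm]
  have heq : ∀ t : ℝ, Phi t = ∫ s, (Iic t).indicator phi s := by
    intro t; rw [integral_indicator measurableSet_Iic]; rfl
  apply Tendsto.congr (fun t => (heq t).symm)
  apply tendsto_integral_filter_of_dominated_convergence phi
  · filter_upwards with t
    exact (continuous_phi.aestronglyMeasurable).indicator measurableSet_Iic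
  · filter_upwards with t
    filter_upwards with s
    rw [Real.norm_eq_abs, abs_of_nonneg (Set.indicator_nonneg (fun x _ => (phi_pos x).le) s)]
    exact Set.indicator_le_self' (fun x _ => (phi_pos x).le) s
  · exact integrable_phi
  · filter_upwards with s
    have : ∀ᶠ t in (atTop : Filter ℝ), (Iic t).indicator phi s = phi s := by
      filter_upwards [eventually_ge_atTop s] with t ht
      rw [Set.indicator_of_mem (mem_Iic.2 ht)]
    exact Tendsto.congr' (this.mono fun t ht => ht.symm) tendsto_const_nhds

lemma tendsto_Phi_atBot : Tendsto Phi atBot (nhds 0) := by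
  have h0 : (0:ℝ) = ∫ s : ℝ, (0:ℝ) := by simp
  rw [h0]
  have heq : ∀ t : ℝ, Phi t = ∫ s, (Iic t).indicator phi s := by
    intro t; rw [integral_indicator measurableSet_Iic]; rfl
  apply Tendsto.congr (fun t => (heq t).symm)
  apply tendsto_integral_filter_of_dominated_convergence phi
  · filter_upwards with t
    exact (continuous_phi.aestronglyMeasurable).indicator measurableSet_Iic
  · filter_upwards with t
    filter_upwards with s
    rw [Real.norm_eq_abs, abs_of_nonneg (Set.indicator_nonneg (fun x _ => (phi_pos x).le) s)]
    exact Set.indicator_le_self' (fun x _ => (phi_pos x).le) s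
  · exact integrable_phi
  · filter_upwards with s
    have : ∀ᶠ t in (atBot : Filter ℝ), (Iic t).indicator phi s = 0 := by
      filter_upwards [eventually_lt_atBot s] with t ht
      rw [Set.indicator_of_notMem (by simpa using ht.not_ge)]
    exact Tendsto.congr' (this.mono fun t ht => ht.symm) tendsto_const_nhds

lemma Phi_surjOn {Y : ℝ} (h0 : 0 < Y) (h1 : Y < 1) : ∃ x, Phi x = Y := by
  obtain ⟨u, hu⟩ := (tendsto_Phi_atBot.eventually (eventually_lt_nhds h0)).exists
  obtain ⟨v, hv⟩ := (tendsto_Phi_atTop.eventually (eventually_gt_nhds h1)).exists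
  have huv : u ≤ v := by
    by_contra hc
    exact absurd (strictMono_Phi (lt_of_not_ge hc)) (by linarith)
  obtain ⟨x, _, hx⟩ := intermediate_value_Icc huv continuous_Phi.continuousOn
    (show Y ∈ Icc (Phi u) (Phi v) from ⟨hu.le, hv.le⟩)
  exact ⟨x, hx⟩

lemma integral_phi_mul_phi (α b : ℝ) :
    ∫ s, phi (α * s + b) * phi s = phi (b / Real.sqrt (1 + α ^ 2)) / Real.sqrt (1 + α ^ 2) := by
  have hc2 : (0:ℝ) < 1 + α ^ 2 := by positivity
  set c : ℝ := Real.sqrt (1 + α ^ 2) with hc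
  have hcpos : 0 < c := Real.sqrt_pos.2 hc2
  have hcsq : c ^ 2 = 1 + α ^ 2 := Real.sq_sqrt hc2.le
  have h2pi : Real.sqrt (2 * Real.pi) * Real.sqrt (2 * Real.pi) = 2 * Real.pi :=
    Real.mul_self_sqrt (by positivity)
  set d : ℝ := α * b / (1 + α ^ 2) with hd
  have hpoint : ∀ s, phi (α * s + b) * phi s
      = (Real.exp (-(b/c) ^ 2 / 2) / (2 * Real.pi)) * Real.exp (-((1 + α^2)/2) * (s + d) ^ 2) := by
    intro s
    rw [phi, phi, div_mul_div_comm, ← Real.exp_add, h2pi, div_mul_eq_mul_div, ← Real.exp_add]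
    congr 2
    have hbc : (b / c) ^ 2 = b ^ 2 / (1 + α ^ 2) := by rw [div_pow, hcsq]
    rw [hbc, hd]
    field_simp
    ring
  simp_rw [hpoint]
  rw [integral_const_mul]
  have hshift : ∫ s : ℝ, Real.exp (-((1 + α^2)/2) * (s + d) ^ 2)
      = ∫ s : ℝ, Real.exp (-((1 + α^2)/2) * s ^ 2) :=
    integral_add_right_eq_self (fun s => Real.exp (-((1 + α^2)/2) * s ^ 2)) d
  rw [hshift, integral_gaussian]
  rw [show π / ((1 + α^2)/2) = (2 * π) / c ^ 2 by rw [hcsq, div_div_eq_mul_div, mul_comm π 2]]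
  rw [Real.sqrt_div (by positivity : (0:ℝ) ≤ 2 * π), Real.sqrt_sq hcpos.le, phi]
  have hne : Real.sqrt (2 * π) ≠ 0 := by positivity
  field_simp
  ring_nf
  rw [Real.sq_sqrt (by positivity)]

lemma integrable_Phi_aux (α x : ℝ) : Integrable (fun s => Phi (α * s + x) * phi s) := by
  apply integrable_phi.mono'
  · exact ((continuous_Phi.comp (by fun_prop)).mul continuous_phi).aestronglyMeasurable
  · filter_upwards with s
    rw [Real.norm_eq_abs, abs_of_nonneg (mul_nonneg (Phi_pos _).le (phi_pos _).le)]
    calc Phi (α * s + x) * phi s ≤ 1 * phi s :=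
      mul_le_mul_of_nonneg_right (Phi_lt_one _).le (phi_pos s).le
    _ = phi s := one_mul _

lemma key_identity (α b : ℝ) :
    ∫ s, Phi (α * s + b) * phi s = Phi (b / Real.sqrt (1 + α ^ 2)) := by
  have hc2 : (0:ℝ) < 1 + α ^ 2 := by positivity
  set c : ℝ := Real.sqrt (1 + α ^ 2) with hc
  have hcpos : 0 < c := Real.sqrt_pos.2 hc2
  set g : ℝ → ℝ := fun x => ∫ s, Phi (α * s + x) * phi s with hg
  have hderiv_g : ∀ x : ℝ, HasDerivAt g (phi (x / c) / c) x := by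
    intro x
    have h := hasDerivAt_integral_of_dominated_loc_of_deriv_le (μ := volume)
      (F := fun x s => Phi (α * s + x) * phi s)
      (F' := fun x s => phi (α * s + x) * phi s)
      (x₀ := x) (bound := fun s => (Real.sqrt (2 * Real.pi))⁻¹ * phi s)
      (s := Metric.ball x 1) (Metric.ball_mem_nhds x one_pos)
      (by filter_upwards with y using
        ((continuous_Phi.comp (by fun_prop)).mul continuous_phi).aestronglyMeasurable)
      (integrable_Phi_aux α x)
      (((continuous_phi.comp (by fun_prop)).mul continuous_phi).aestronglyMeasurable)
      (by
        filter_upwards with s y _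
        rw [Real.norm_eq_abs, abs_of_nonneg (mul_nonneg (phi_pos _).le (phi_pos _).le)]
        exact mul_le_mul_of_nonneg_right (phi_le _) (phi_pos s).le)
      (integrable_phi.const_mul _)
      (by
        filter_upwards with s y _
        have h1 : HasDerivAt (fun z => α * s + z) 1 y := (hasDerivAt_id y).const_add (α * s)
        have h2 : HasDerivAt (fun z => Phi (α * s + z)) (phi (α * s + y)) y := by
          have := (hasDerivAt_Phi (α * s + y)).comp y h1
          simpa [Function.comp_def] using this
        exact h2.mul_const (phi s))
    rw [integral_phi_mul_phi α x] at h
    exact h.2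
  have hderiv_P : ∀ x : ℝ, HasDerivAt (fun x => Phi (x / c)) (phi (x / c) / c) x := by
    intro x
    have h1 : HasDerivAt (fun z : ℝ => z / c) (1 / c) x := (hasDerivAt_id x).div_const c
    have := (hasDerivAt_Phi (x / c)).comp x h1
    simpa [div_eq_mul_inv, mul_comm, Function.comp_def] using this
  set G : ℝ → ℝ := fun x => g x - Phi (x / c) with hG
  have hconst : ∀ x y : ℝ, G x = G y := by
    intro x y
    apply is_const_of_deriv_eq_zero
    · intro z
      exact ((hderiv_g z).sub (hderiv_P z)).differentiableAt
    · intro z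
      exact ((hderiv_g z).sub (hderiv_P z)).deriv.trans (sub_self _)
  have hlim_g : Tendsto g atBot (nhds 0) := by
    have h0 : (0:ℝ) = ∫ s : ℝ, (0:ℝ) := by simp
    rw [h0]
    apply tendsto_integral_filter_of_dominated_convergence phi
    · filter_upwards with x using
        ((continuous_Phi.comp (by fun_prop)).mul continuous_phi).aestronglyMeasurable
    · filter_upwards with x
      filter_upwards with s
      rw [Real.norm_eq_abs, abs_of_nonneg (mul_nonneg (Phi_pos _).le (phi_pos _).le)]
      calc Phi (α * s + x) * phi s ≤ 1 * phi s :=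
        mul_le_mul_of_nonneg_right (Phi_lt_one _).le (phi_pos s).le
      _ = phi s := one_mul _
    · exact integrable_phi
    · filter_upwards with s
      have h1 : Tendsto (fun x : ℝ => α * s + x) atBot atBot :=
        tendsto_atBot_add_const_left _ _ tendsto_id
      have := (tendsto_Phi_atBot.comp h1).mul_const (phi s)
      simpa using this
  have hlim_P : Tendsto (fun x : ℝ => Phi (x / c)) atBot (nhds 0) := by
    apply tendsto_Phi_atBot.comp
    exact Tendsto.atBot_div_const hcpos tendsto_id
  have hlimG : Tendsto G atBot (nhds 0) := by
    simpa using hlim_g.sub hlim_P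
  have hG0 : ∀ x, G x = 0 := by
    intro x
    have h1 : Tendsto G atBot (nhds (G x)) := by
      have : G = fun _ => G x := funext fun y => hconst y x
      rw [this]; exact tendsto_const_nhds
    exact tendsto_nhds_unique h1 hlimG
  have := hG0 b
  simp only [hG, hg] at this
  linarith

lemma tendsto_integral_Iic_atTop (g : ℝ → ℝ) (hg : Integrable g) :
    Tendsto (fun t => ∫ s in Iic t, g s) atTop (nhds (∫ s, g s)) := by
  have heq : ∀ t : ℝ, ∫ s in Iic t, g s = ∫ s, (Iic t).indicator g s := by
    intro t; rw [integral_indicator measurableSet_Iic]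
  apply Tendsto.congr (fun t => (heq t).symm)
  apply tendsto_integral_filter_of_dominated_convergence (fun s => ‖g s‖)
  · filter_upwards with t using hg.aestronglyMeasurable.indicator measurableSet_Iic
  · filter_upwards with t
    filter_upwards with s
    exact norm_indicator_le_norm_self _ _
  · exact hg.norm
  · filter_upwards with s
    apply Tendsto.congr' _ tendsto_const_nhds
    filter_upwards [eventually_ge_atTop s] with t ht
    rw [Set.indicator_of_mem (mem_Iic.2 ht)]

theorem stmt_13 (a : ℝ → ℝ → ℝ → ℝ)
    (ha : ∀ t p y : ℝ, 0 < y → y < Phi t →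
      ∫ s in Set.Iic t, Phi (a t p y * (s - t) + p) * phi s = y)
    (f : ℝ → ℝ) (hf : ContDiff ℝ 1 f) (hf01 : ∀ t, f t ∈ Set.Ioo (0 : ℝ) 1) :
    Tendsto (fun t => M a t (Function.invFun Phi (f t)) (∫ s in Set.Iic t, f s * phi s))
      atTop (nhds (GaussI (∫ s, f s * phi s))) := by
  have hfc : Continuous f := hf.continuous
  -- integrability facts
  have hint : Integrable (fun s => f s * phi s) := by
    apply integrable_phi.mono' (hfc.mul continuous_phi).aestronglyMeasurable
    filter_upwards with s
    show ‖f s * phi s‖ ≤ phi s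
    rw [Real.norm_eq_abs, abs_of_nonneg (mul_nonneg (hf01 s).1.le (phi_pos s).le)]
    calc f s * phi s ≤ 1 * phi s :=
      mul_le_mul_of_nonneg_right (hf01 s).2.le (phi_pos s).le
    _ = phi s := one_mul _
  have hint1 : Integrable (fun s => (1 - f s) * phi s) := by
    apply integrable_phi.mono' ((continuous_const.sub hfc).mul continuous_phi).aestronglyMeasurable
    filter_upwards with s
    show ‖(1 - f s) * phi s‖ ≤ phi s
    rw [Real.norm_eq_abs, abs_of_nonneg (mul_nonneg (by linarith [(hf01 s).2]) (phi_pos s).le)]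
    nlinarith [(hf01 s).1, phi_pos s]
  set Y : ℝ := ∫ s, f s * phi s with hYdef
  -- 0 < Y < 1
  have hY0 : 0 < Y := by
    rw [hYdef, ← setIntegral_univ]
    rw [setIntegral_pos_iff_support_of_nonneg_ae]
    · have hsupp : Function.support (fun s => f s * phi s) = univ := by
        ext s
        simp only [Function.mem_support, mem_univ, iff_true]
        exact mul_ne_zero (hf01 s).1.ne' (phi_pos s).ne'
      rw [hsupp, univ_inter]
      simp
    · filter_upwards with s using mul_nonneg (hf01 s).1.le (phi_pos s).le
    · exact hint.integrableOn
  have hY1 : Y < 1 := by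
    have h1 : 0 < ∫ s, (1 - f s) * phi s := by
      rw [← setIntegral_univ]
      rw [setIntegral_pos_iff_support_of_nonneg_ae]
      · have hsupp : Function.support (fun s => (1 - f s) * phi s) = univ := by
          ext s
          simp only [Function.mem_support, mem_univ, iff_true]
          exact mul_ne_zero (sub_ne_zero.mpr (hf01 s).2.ne') (phi_pos s).ne'
        rw [hsupp, univ_inter]
        simp
      · filter_upwards with s using mul_nonneg (by linarith [(hf01 s).2]) (phi_pos s).le
      · exact hint1.integrableOn
    have h2 : ∫ s, (1 - f s) * phi s = 1 - Y := by
      have : (fun s => (1 - f s) * phi s) = fun s => phi s - f s * phi s := by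
        funext s; ring
      rw [this, integral_sub integrable_phi hint, integral_phi, hYdef]
    linarith
  set y : ℝ → ℝ := fun t => ∫ s in Iic t, f s * phi s with hydef
  have hy0 : ∀ t, 0 < y t := by
    intro t
    rw [hydef]
    rw [setIntegral_pos_iff_support_of_nonneg_ae]
    · have hsupp : Function.support (fun s => f s * phi s) = univ := by
        ext s
        simp only [Function.mem_support, mem_univ, iff_true]
        exact mul_ne_zero (hf01 s).1.ne' (phi_pos s).ne'
      rw [hsupp, univ_inter]
      simp [Real.volume_Iic]
    · filter_upwards with s using mul_nonneg (hf01 s).1.le (phi_pos s).le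
    · exact hint.integrableOn
  have hy1 : ∀ t, y t < Phi t := by
    intro t
    have h1 : 0 < ∫ s in Iic t, (1 - f s) * phi s := by
      rw [setIntegral_pos_iff_support_of_nonneg_ae]
      · have hsupp : Function.support (fun s => (1 - f s) * phi s) = univ := by
          ext s
          simp only [Function.mem_support, mem_univ, iff_true]
          exact mul_ne_zero (sub_ne_zero.mpr (hf01 s).2.ne') (phi_pos s).ne'
        rw [hsupp, univ_inter]
        simp [Real.volume_Iic]
      · filter_upwards with s using mul_nonneg (by linarith [(hf01 s).2]) (phi_pos s).le
      · exact hint1.integrableOn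
    have h2 : ∫ s in Iic t, (1 - f s) * phi s = Phi t - y t := by
      have heq : (fun s => (1 - f s) * phi s) = fun s => phi s - f s * phi s := by
        funext s; ring
      rw [heq, integral_sub integrable_phi.integrableOn hint.integrableOn]
      rfl
    linarith
  have hyY : Tendsto y atTop (nhds Y) := tendsto_integral_Iic_atTop _ hint
  -- the inverse point
  set L : ℝ := Function.invFun Phi Y with hLdef
  have hL : Phi L = Y := Function.invFun_eq (Phi_surjOn hY0 hY1)
  -- abbreviations
  set p : ℝ → ℝ := fun t => Function.invFun Phi (f t) with hpdef
  set A : ℝ → ℝ := fun t => a t (p t) (y t) with hAdef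
  set c : ℝ → ℝ := fun t => Real.sqrt (1 + (A t) ^ 2) with hcdef
  set q : ℝ → ℝ := fun t => (p t - A t * t) / c t with hqdef
  have hc2 : ∀ t, (0:ℝ) < 1 + (A t) ^ 2 := fun t => by positivity
  have hcpos : ∀ t, 0 < c t := fun t => Real.sqrt_pos.2 (hc2 t)
  have hcsq : ∀ t, c t ^ 2 = 1 + (A t) ^ 2 := fun t => Real.sq_sqrt (hc2 t).le
  have hc1 : ∀ t, 1 ≤ c t := by
    intro t
    nlinarith [hcsq t, hcpos t, sq_nonneg (A t), sq_nonneg (c t - 1)]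
  -- key bounds on Phi (q t)
  have hbounds : ∀ t, y t ≤ Phi (q t) ∧ Phi (q t) ≤ y t + (1 - Phi t) := by
    intro t
    have h0 := ha t (p t) (y t) (hy0 t) (hy1 t)
    have heq : ∀ s : ℝ, Phi (A t * (s - t) + p t) = Phi (A t * s + (p t - A t * t)) := by
      intro s; congr 1; ring
    have h1 : ∫ s in Iic t, Phi (A t * s + (p t - A t * t)) * phi s = y t := by
      rw [← h0]
      apply setIntegral_congr_fun measurableSet_Iic
      intro s _
      show Phi (A t * s + (p t - A t * t)) * phi s
        = Phi (A t * (s - t) + p t) * phi s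
      rw [heq s]
    have hsplit := intervalIntegral.integral_Iic_add_Ioi (b := t)
      (integrable_Phi_aux (A t) (p t - A t * t)).integrableOn
      (integrable_Phi_aux (A t) (p t - A t * t)).integrableOn
    rw [h1, key_identity] at hsplit
    have hq_eq : Phi (q t) = y t + ∫ s in Ioi t, Phi (A t * s + (p t - A t * t)) * phi s := by
      rw [hqdef]; dsimp only; rw [hcdef]; dsimp only; linarith [hsplit]
    constructor
    · rw [hq_eq]
      have : 0 ≤ ∫ s in Ioi t, Phi (A t * s + (p t - A t * t)) * phi s :=
        setIntegral_nonneg measurableSet_Ioi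
          (fun s _ => mul_nonneg (Phi_pos _).le (phi_pos _).le)
      linarith
    · rw [hq_eq]
      have h2 : ∫ s in Ioi t, Phi (A t * s + (p t - A t * t)) * phi s
          ≤ ∫ s in Ioi t, phi s := by
        apply setIntegral_mono (μ := volume) (s := Ioi t)
          (integrable_Phi_aux (A t) (p t - A t * t)).integrableOn
          integrable_phi.integrableOn
        intro s
        calc Phi (A t * s + (p t - A t * t)) * phi s ≤ 1 * phi s :=
          mul_le_mul_of_nonneg_right (Phi_lt_one _).le (phi_pos s).le
        _ = phi s := one_mul _
      rw [integral_Ioi_phi] at h2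
      linarith
  -- Phi (q t) → Y
  have hPhiq : Tendsto (fun t => Phi (q t)) atTop (nhds Y) := by
    have hupper : Tendsto (fun t => y t + (1 - Phi t)) atTop (nhds Y) := by
      have := hyY.add ((tendsto_const_nhds (x := (1:ℝ))).sub tendsto_Phi_atTop)
      simpa using this
    exact tendsto_of_tendsto_of_tendsto_of_le_of_le hyY hupper
      (fun t => (hbounds t).1) (fun t => (hbounds t).2)
  -- q t → L
  have hq : Tendsto q atTop (nhds L) := by
    rw [tendsto_order]
    constructor
    · intro x hx
      have hPx : Phi x < Y := by rw [← hL]; exact strictMono_Phi hx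
      filter_upwards [hPhiq.eventually (eventually_gt_nhds hPx)] with t ht
      exact strictMono_Phi.lt_iff_lt.1 ht
    · intro x hx
      have hPx : Y < Phi x := by rw [← hL]; exact strictMono_Phi hx
      filter_upwards [hPhiq.eventually (eventually_lt_nhds hPx)] with t ht
      exact strictMono_Phi.lt_iff_lt.1 ht
  have hphiq : Tendsto (fun t => phi (q t)) atTop (nhds (phi L)) :=
    (continuous_phi.continuousAt.tendsto).comp hq
  -- second factor
  set r : ℝ → ℝ := fun t => (t + A t * p t) / c t with hrdef
  have hr_id : ∀ t, r t = t * c t + A t * q t := by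
    intro t
    rw [hrdef, hqdef]
    dsimp only
    have hcc : c t * c t = 1 + A t ^ 2 := by rw [← pow_two]; exact hcsq t
    field_simp [(hcpos t).ne']
    linear_combination (-t : ℝ) * hcc
  have hr : Tendsto r atTop atTop := by
    set K : ℝ := |L| + 1 with hK
    have hev : ∀ᶠ t in atTop, t - K ≤ r t := by
      have h1 : ∀ᶠ t in atTop, q t < L + 1 := hq.eventually (eventually_lt_nhds (by linarith))
      have h2 : ∀ᶠ t in atTop, L - 1 < q t := hq.eventually (eventually_gt_nhds (by linarith))
      filter_upwards [h1, h2, eventually_ge_atTop K] with t ht1 ht2 ht3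
      have hqK : |q t| ≤ K := by
        rw [abs_le]; constructor
        · have := neg_abs_le L; linarith
        · have := le_abs_self L; linarith
      have hAc : |A t| ≤ c t := by
        rw [hcdef, ← Real.sqrt_sq_eq_abs]
        exact Real.sqrt_le_sqrt (by nlinarith)
      have habs : |A t * q t| ≤ c t * K := by
        rw [abs_mul]
        exact mul_le_mul hAc hqK (abs_nonneg _) (hcpos t).le
      rw [hr_id t]
      nlinarith [neg_abs_le (A t * q t), hc1 t, hcpos t]
    apply tendsto_atTop_mono' atTop hev
    exact tendsto_atTop_add_const_right atTop (-K) tendsto_id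
  have hPhir : Tendsto (fun t => Phi (r t)) atTop (nhds 1) := tendsto_Phi_atTop.comp hr
  -- combine
  have hfinal : Tendsto (fun t => phi (q t) * Phi (r t)) atTop (nhds (phi L * 1)) :=
    hphiq.mul hPhir
  rw [mul_one] at hfinal
  have hGI : GaussI Y = phi L := by rw [GaussI, if_pos ⟨hY0, hY1⟩]
  rw [hGI]
  exact hfinal.congr (fun t => rfl)
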